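/- Let ρ ∈ (−1,1) and let G₀(y) = log(1 + 2ρy + y²) + (2ρ/√(1−ρ²))·(arctan(ρ/√(1−ρ²)) − arctan((y+ρ)/√(1−ρ²))). Then G₀(0) = 0, G₀ is strictly decreasing on (−∞, 0] and strictly increasing on [0, ∞); in particular G₀(y) > 0 for every y ≠ 0, so the implied-volatility shape function f(y) = |y|/√(G₀(y)) is well-defined and positive for y ≠ 0. -/

import Mathlib

/-- For ρ ∈ (−1,1), the function
G₀(y) = log(1 + 2ρy + y²) + (2ρ/√(1−ρ²))·(arctan(ρ/√(1−ρ²)) − arctan((y+ρ)/√(1−ρ²)))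
satisfies G₀(0) = 0, is strictly decreasing on (−∞,0] and strictly increasing on
[0,∞); in particular G₀(y) > 0 for y ≠ 0, so f(y) = |y|/√(G₀(y)) is well-defined
and positive for y ≠ 0. -/
theorem stmt_17 (ρ : ℝ) (hρ : ρ ∈ Set.Ioo (-1 : ℝ) 1) (G₀ : ℝ → ℝ)
    (hG₀ : ∀ y : ℝ, G₀ y =
      Real.log (1 + 2 * ρ * y + y ^ 2) +
        (2 * ρ / Real.sqrt (1 - ρ ^ 2)) *
          (Real.arctan (ρ / Real.sqrt (1 - ρ ^ 2)) -
            Real.arctan ((y + ρ) / Real.sqrt (1 - ρ ^ 2)))) :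
    G₀ 0 = 0 ∧
      StrictAntiOn G₀ (Set.Iic (0 : ℝ)) ∧
      StrictMonoOn G₀ (Set.Ici (0 : ℝ)) ∧
      ∀ y : ℝ, y ≠ 0 → 0 < G₀ y ∧ 0 < |y| / Real.sqrt (G₀ y) := by
  obtain ⟨h1, h2⟩ := hρ
  have hs2 : (0:ℝ) < 1 - ρ^2 := by nlinarith
  set s := Real.sqrt (1 - ρ^2) with hs
  have hs0 : 0 < s := Real.sqrt_pos.mpr hs2
  have hssq : s^2 = 1 - ρ^2 := Real.sq_sqrt hs2.le
  have hQ : ∀ y : ℝ, 0 < 1 + 2*ρ*y + y^2 := by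
    intro y; nlinarith [sq_nonneg (y+ρ)]
  have hGfun : G₀ = fun y => Real.log (1 + 2*ρ*y + y^2) +
      (2*ρ/s) * (Real.arctan (ρ/s) - Real.arctan ((y+ρ)/s)) := funext hG₀
  have hderiv : ∀ y : ℝ, HasDerivAt G₀ (2*y/(1+2*ρ*y+y^2)) y := by
    intro y
    have hin : HasDerivAt (fun y : ℝ => 1+2*ρ*y+y^2) (2*ρ + 2*y) y := by
      have ha : HasDerivAt (fun y : ℝ => 1 + 2*ρ*y) (2*ρ) y := by
        simpa using ((hasDerivAt_id y).const_mul (2*ρ)).const_add 1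
      have hb : HasDerivAt (fun y : ℝ => y^2) (2*y) y := by
        simpa using hasDerivAt_pow 2 y
      exact ha.add hb
    have hlog : HasDerivAt (fun y => Real.log (1+2*ρ*y+y^2))
        ((2*ρ + 2*y)/(1+2*ρ*y+y^2)) y := hin.log (hQ y).ne'
    have harc : HasDerivAt (fun y => Real.arctan ((y+ρ)/s))
        (s/(1+2*ρ*y+y^2)) y := by
      have hin2 : HasDerivAt (fun y : ℝ => (y+ρ)/s) (1/s) y := by
        simpa using ((hasDerivAt_id y).add_const ρ).div_const s
      have h := (Real.hasDerivAt_arctan ((y+ρ)/s)).comp y hin2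
      refine h.congr_deriv ?_
      have hQne := (hQ y).ne'
      have hsne := hs0.ne'
      have key : 1 + ((y+ρ)/s)^2 = (1+2*ρ*y+y^2)/s^2 := by
        field_simp
        linear_combination hssq
      rw [key]
      field_simp
    have hsum : HasDerivAt G₀
        ((2*ρ + 2*y)/(1+2*ρ*y+y^2) + (2*ρ/s) * -(s/(1+2*ρ*y+y^2))) y := by
      rw [hGfun]
      exact hlog.add ((harc.const_sub (Real.arctan (ρ/s))).const_mul (2*ρ/s))
    convert hsum using 1
    have hQne := (hQ y).ne'
    have hsne := hs0.ne'
    field_simp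
    ring
  have hcont : Continuous G₀ := by
    have hdiff : Differentiable ℝ G₀ := fun y => (hderiv y).differentiableAt
    exact hdiff.continuous
  have hderiv' : ∀ y, deriv G₀ y = 2*y/(1+2*ρ*y+y^2) := fun y => (hderiv y).deriv
  have hzero : G₀ 0 = 0 := by
    rw [hG₀]; norm_num
  have hanti : StrictAntiOn G₀ (Set.Iic (0:ℝ)) := by
    apply StrictAntiOn.mono _ (le_refl (Set.Iic (0:ℝ)))
    apply strictAntiOn_of_deriv_neg (convex_Iic 0) hcont.continuousOn
    intro x hx
    rw [interior_Iic] at hx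
    rw [hderiv' x]
    exact div_neg_of_neg_of_pos (by linarith [hx.out]) (hQ x)
  have hmono : StrictMonoOn G₀ (Set.Ici (0:ℝ)) := by
    apply strictMonoOn_of_deriv_pos (convex_Ici 0) hcont.continuousOn
    intro x hx
    rw [interior_Ici] at hx
    rw [hderiv' x]
    exact div_pos (by linarith [hx.out]) (hQ x)
  refine ⟨hzero, hanti, hmono, fun y hy => ?_⟩
  have hpos : 0 < G₀ y := by
    rcases lt_or_gt_of_ne hy with h | h
    · have := hanti (Set.mem_Iic.mpr h.le) (Set.mem_Iic.mpr le_rfl) h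
      rwa [hzero] at this
    · have := hmono (Set.mem_Ici.mpr le_rfl) (Set.mem_Ici.mpr h.le) h
      rwa [hzero] at this
  exact ⟨hpos, div_pos (abs_pos.mpr hy) (Real.sqrt_pos.mpr hpos)⟩
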